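/- Let A=(S,R) be a finite argumentation network. The maps h ↦ λ_h and λ ↦ h_λ are mutually inverse bijections between the set of assignments h that are models of Δ_A (i.e. t ⊨_h φ for all φ∈Δ_A) and the set of complete extensions of A. -/
import Mathlib


/-- The three Caminada labels. -/
inductive Label where
  | in_ : Label
  | out : Label
  | und : Label
deriving DecidableEq

/-- Propositional intuitionistic formulas over atoms `α`, with the
distinguished constant `nconst` (the paper's `n`). -/
inductive Form (α : Type) where
  | atom : α → Form α
  | nconst : Form α
  | top : Form α
  | bot : Form α
  | and : Form α → Form α → Form α
  | or : Form α → Form α → Form α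
  | imp : Form α → Form α → Form α
  | neg : Form α → Form α

/-- Forcing in the two-world Kripke model: world `false` is `t`, world `true`
is `s`, with `t < s` (i.e. the Bool order). `h` assigns to each atom its pair
of truth values (at `t`, at `s`). The constant `n` has value `(⊥,⊤)`. -/
def force {α : Type} (h : α → Bool × Bool) : Bool → Form α → Prop
  | w, .atom x => (if w then (h x).2 else (h x).1) = true
  | w, .nconst => w = true
  | _, .top => True
  | _, .bot => False
  | w, .and A B => force h w A ∧ force h w B
  | w, .or A B => force h w A ∨ force h w B
  | w, .imp A B => ∀ v : Bool, w ≤ v → force h v A → force h v B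
  | w, .neg A => ∀ v : Bool, w ≤ v → ¬ force h v A

/-- An assignment is legitimate when no atom gets the forbidden value `(⊤,⊥)`. -/
def Persistent {α : Type} (h : α → Bool × Bool) : Prop :=
  ∀ x, (h x).1 = true → (h x).2 = true

def bigAnd {α : Type} : List (Form α) → Form α
  | [] => .top
  | f :: fs => .and f (bigAnd fs)

def bigOr {α : Type} : List (Form α) → Form α
  | [] => .bot
  | f :: fs => .or f (bigOr fs)

/-- The list of attackers of `x` in the network `(α, R)`. -/
noncomputable def attackers {α : Type} [Fintype α] (R : α → α → Prop) [DecidableRel R] (x : α) : List α :=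
  (Finset.univ.filter (fun y => R y x)).toList

/-- (a1)  `x → (n ∨ ⋀_{yRx} ¬y)` -/
noncomputable def fa1 {α : Type} [Fintype α] (R : α → α → Prop) [DecidableRel R] (x : α) : Form α :=
  .imp (.atom x) (.or .nconst (bigAnd ((attackers R x).map (fun y => .neg (.atom y)))))

/-- (a2)  `(⋀_{yRx} ¬y) → (n ∨ x)` -/
noncomputable def fa2 {α : Type} [Fintype α] (R : α → α → Prop) [DecidableRel R] (x : α) : Form α :=
  .imp (bigAnd ((attackers R x).map (fun y => .neg (.atom y)))) (.or .nconst (.atom x))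

/-- (b1)  `¬x → (n ∨ ⋁_{yRx} y)` -/
noncomputable def fb1 {α : Type} [Fintype α] (R : α → α → Prop) [DecidableRel R] (x : α) : Form α :=
  .imp (.neg (.atom x)) (.or .nconst (bigOr ((attackers R x).map (fun y => .atom y))))

/-- (b2)  `(⋁_{yRx} y) → (¬x ∨ n)` -/
noncomputable def fb2 {α : Type} [Fintype α] (R : α → α → Prop) [DecidableRel R] (x : α) : Form α :=
  .imp (bigOr ((attackers R x).map (fun y => .atom y))) (.or (.neg (.atom x)) .nconst)

/-- `h` is a model of the theory `Δ_A`: every formula of `Δ_A` holds at `t`. -/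
def ModelsDelta {α : Type} [Fintype α] (h : α → Bool × Bool)
    (R : α → α → Prop) [DecidableRel R] : Prop :=
  ∀ x, force h false (fa1 R x) ∧ force h false (fa2 R x) ∧
    force h false (fb1 R x) ∧ force h false (fb2 R x)

/-- Caminada labelling / complete extension of the network `(α, R)`. -/
def IsCompleteExt {α : Type} (R : α → α → Prop) (l : α → Label) : Prop :=
  (∀ x, l x = .in_ ↔ ∀ y, R y x → l y = .out) ∧
  (∀ x, l x = .out ↔ ∃ y, R y x ∧ l y = .in_) ∧
  (∀ x, l x = .und ↔ ((∀ y, R y x → l y ≠ .in_) ∧ ∃ y, R y x ∧ l y = .und))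

/-- The labelling `λ_h` induced by an assignment `h`. -/
def lamOf {α : Type} (h : α → Bool × Bool) (x : α) : Label :=
  if h x = (true, true) then .in_ else if h x = (false, false) then .out else .und

/-- The assignment `h_λ` induced by a labelling `λ`. -/
def assignOf {α : Type} (l : α → Label) (x : α) : Bool × Bool :=
  match l x with
  | .in_ => (true, true)
  | .out => (false, false)
  | .und => (false, true)

lemma mem_attackers {α : Type} [Fintype α] (R : α → α → Prop) [DecidableRel R] {x y : α} :
    y ∈ attackers R x ↔ R y x := by
  simp [attackers]

lemma force_bigAnd {α : Type} (h : α → Bool × Bool) (w : Bool) (L : List (Form α)) :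
    force h w (bigAnd L) ↔ ∀ f ∈ L, force h w f := by
  induction L with
  | nil => simp [bigAnd, force]
  | cons f fs ih => simp [bigAnd, force, ih]

lemma force_bigOr {α : Type} (h : α → Bool × Bool) (w : Bool) (L : List (Form α)) :
    force h w (bigOr L) ↔ ∃ f ∈ L, force h w f := by
  induction L with
  | nil => simp [bigOr, force]
  | cons f fs ih => simp [bigOr, force, ih]

lemma force_negAtom {α : Type} (h : α → Bool × Bool) (w : Bool) (y : α) :
    force h w (Form.neg (Form.atom y)) ↔
      ((w = false → (h y).1 = false) ∧ (h y).2 = false) := by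
  show (∀ v : Bool, w ≤ v → ¬ force h v (Form.atom y)) ↔ _
  constructor
  · intro H
    refine ⟨fun hw => ?_, ?_⟩
    · have := H false (by simp [hw]); simp [force] at this; exact this
    · have := H true (Bool.le_true _); simp [force] at this; exact this
  · rintro ⟨h1, h2⟩ v hv
    cases v with
    | false =>
      cases w with
      | false =>
        show ¬ ((if false then (h y).2 else (h y).1) = true)
        simp [h1 rfl]
      | true => exact absurd hv (by decide)
    | true => simp [force, h2]

lemma mdelta_iff {α : Type} [Fintype α] (R : α → α → Prop) [DecidableRel R]
    (h : α → Bool × Bool) :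
    ModelsDelta h R ↔ ∀ x : α,
      (((h x).1 = true) → ∀ y, R y x → h y = (false, false)) ∧
      ((∀ y, R y x → h y = (false, false)) → (h x).1 = true) ∧
      ((h x = (false, false)) → ∃ y, R y x ∧ (h y).1 = true) ∧
      ((∃ y, R y x ∧ (h y).1 = true) → h x = (false, false)) := by
  have negAndChar : ∀ (w : Bool) (x : α),
      force h w (bigAnd ((attackers R x).map (fun y => Form.neg (Form.atom y)))) ↔
        ∀ y, R y x → force h w (Form.neg (Form.atom y)) := by
    intro w x
    rw [force_bigAnd]
    constructor
    · intro H y hy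
      exact H _ (List.mem_map.2 ⟨y, (mem_attackers R).2 hy, rfl⟩)
    · rintro H f hf
      rcases List.mem_map.1 hf with ⟨y, hy, rfl⟩
      exact H y ((mem_attackers R).1 hy)
  have orChar : ∀ (w : Bool) (x : α),
      force h w (bigOr ((attackers R x).map (fun y => Form.atom y))) ↔
        ∃ y, R y x ∧ force h w (Form.atom y) := by
    intro w x
    rw [force_bigOr]
    constructor
    · rintro ⟨f, hf, hforce⟩
      rcases List.mem_map.1 hf with ⟨y, hy, rfl⟩
      exact ⟨y, (mem_attackers R).1 hy, hforce⟩
    · rintro ⟨y, hy, hforce⟩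
      exact ⟨_, List.mem_map.2 ⟨y, (mem_attackers R).2 hy, rfl⟩, hforce⟩
  constructor
  · intro hm x
    obtain ⟨h1, h2, h3, h4⟩ := hm x
    refine ⟨?_, ?_, ?_, ?_⟩
    · intro hx y hy
      have := h1 false (le_refl _) (by simpa [force] using hx)
      rcases this with hn | hc
      · simp [force] at hn
      · have := (negAndChar false x).1 hc y hy
        rw [force_negAtom] at this
        exact Prod.ext (this.1 rfl) this.2
    · intro hall
      have hant : force h false (bigAnd ((attackers R x).map (fun y => Form.neg (Form.atom y)))) := by
        rw [negAndChar]
        intro y hy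
        rw [force_negAtom]
        exact ⟨fun _ => by simp [hall y hy], by simp [hall y hy]⟩
      have := h2 false (le_refl _) hant
      rcases this with hn | hc
      · simp [force] at hn
      · simpa [force] using hc
    · intro hx
      have hant : force h false (Form.neg (Form.atom x)) := by
        rw [force_negAtom]
        exact ⟨fun _ => by simp [hx], by simp [hx]⟩
      have := h3 false (le_refl _) hant
      rcases this with hn | hc
      · simp [force] at hn
      · rcases (orChar false x).1 hc with ⟨y, hy, hf⟩
        exact ⟨y, hy, by simpa [force] using hf⟩
    · rintro ⟨y, hy, hf⟩
      have hant : force h false (bigOr ((attackers R x).map (fun y => Form.atom y))) := by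
        rw [orChar]; exact ⟨y, hy, by simpa [force] using hf⟩
      have := h4 false (le_refl _) hant
      rcases this with hc | hn
      · rw [force_negAtom] at hc
        exact Prod.ext (hc.1 rfl) hc.2
      · simp [force] at hn
  · intro hm x
    obtain ⟨c1, c2, c3, c4⟩ := hm x
    refine ⟨?_, ?_, ?_, ?_⟩
    · -- fa1
      intro v _ hx
      cases v with
      | false =>
        refine Or.inr ?_
        rw [negAndChar]
        intro y hy
        rw [force_negAtom]
        have := c1 (by simpa [force] using hx) y hy
        exact ⟨fun _ => by simp [this], by simp [this]⟩
      | true => exact Or.inl (by simp [force])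
    · -- fa2
      intro v _ hant
      cases v with
      | false =>
        refine Or.inr ?_
        rw [negAndChar] at hant
        have : ∀ y, R y x → h y = (false, false) := by
          intro y hy
          have := hant y hy
          rw [force_negAtom] at this
          exact Prod.ext (this.1 rfl) this.2
        simpa [force] using c2 this
      | true => exact Or.inl (by simp [force])
    · -- fb1
      intro v _ hneg
      cases v with
      | false =>
        refine Or.inr ?_
        rw [force_negAtom] at hneg
        have hx : h x = (false, false) := Prod.ext (hneg.1 rfl) hneg.2
        rcases c3 hx with ⟨y, hy, hf⟩
        rw [orChar]
        exact ⟨y, hy, by simpa [force] using hf⟩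
      | true => exact Or.inl (by simp [force])
    · -- fb2
      intro v _ hor
      cases v with
      | false =>
        refine Or.inl ?_
        rw [orChar] at hor
        rcases hor with ⟨y, hy, hf⟩
        have hx := c4 ⟨y, hy, by simpa [force] using hf⟩
        rw [force_negAtom]
        exact ⟨fun _ => by simp [hx], by simp [hx]⟩
      | true => exact Or.inr (by simp [force])

/-- The maps `h ↦ λ_h` and `λ ↦ h_λ` are mutually inverse bijections between
the assignments that are models of `Δ_A` and the complete extensions of `A`. -/
theorem stmt2 {α : Type} [Fintype α] [Nonempty α] (R : α → α → Prop) [DecidableRel R] :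
    (∀ h : α → Bool × Bool, Persistent h → ModelsDelta h R →
      IsCompleteExt R (lamOf h) ∧ assignOf (lamOf h) = h) ∧
    (∀ l : α → Label, IsCompleteExt R l →
      Persistent (assignOf l) ∧ ModelsDelta (assignOf l) R ∧ lamOf (assignOf l) = l) := by
  constructor
  · intro h hp hm
    have C := (mdelta_iff R h).1 hm
    have hin : ∀ x, lamOf h x = .in_ ↔ h x = (true, true) := by
      intro x; unfold lamOf; split_ifs <;> simp_all
    have hout : ∀ x, lamOf h x = .out ↔ h x = (false, false) := by
      intro x; unfold lamOf; split_ifs <;> simp_all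
    have hund : ∀ x, lamOf h x = .und ↔ h x = (false, true) := by
      intro x
      have hpx := hp x
      unfold lamOf; split_ifs with h1 h2
      · simp_all
      · simp_all
      · constructor
        · intro _
          rcases hhx : h x with ⟨a, b⟩
          rw [hhx] at h1 h2 hpx
          cases a <;> cases b <;> simp_all
        · intro _; rfl
    have h1true : ∀ x, (h x).1 = true ↔ h x = (true, true) := by
      intro x
      constructor
      · intro hx; exact Prod.ext hx (hp x hx)
      · intro hx; simp [hx]
    refine ⟨⟨?_, ?_, ?_⟩, ?_⟩
    · intro x
      rw [hin]
      constructor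
      · intro hx y hy
        rw [hout]
        exact (C x).1 (by simp [hx]) y hy
      · intro hall
        rw [← h1true]
        exact (C x).2.1 (fun y hy => (hout y).1 (hall y hy))
    · intro x
      rw [hout]
      constructor
      · intro hx
        rcases (C x).2.2.1 hx with ⟨y, hy, hf⟩
        exact ⟨y, hy, (hin y).2 ((h1true y).1 hf)⟩
      · rintro ⟨y, hy, hl⟩
        exact (C x).2.2.2 ⟨y, hy, by simp [(hin y).1 hl]⟩
    · intro x
      rw [hund]
      constructor
      · intro hx
        constructor
        · intro y hy hl
          have := (C x).2.2.2 ⟨y, hy, by simp [(hin y).1 hl]⟩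
          rw [hx] at this; simp at this
        · by_contra hno
          push_neg at hno
          have hall : ∀ y, R y x → h y = (false, false) := by
            intro y hy
            have hnu := hno y hy
            rcases hly : lamOf h y with _ | _ | _
            · exfalso
              have := (C x).2.2.2 ⟨y, hy, by simp [(hin y).1 hly]⟩
              rw [hx] at this; simp at this
            · exact (hout y).1 hly
            · exact absurd hly hnu
          have := (C x).2.1 hall
          rw [hx] at this; simp at this
      · rintro ⟨hnotin, y, hy, hyund⟩
        have hy2 : (h x).2 = true := by
          by_contra hb
          have hxff : h x = (false, false) := by
            have h1 : (h x).1 = false := by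
              by_contra hb1
              exact hb (by rw [hp x (by simpa using hb1)])
            exact Prod.ext h1 (by simpa using hb)
          rcases (C x).2.2.1 hxff with ⟨z, hz, hzf⟩
          exact hnotin z hz ((hin z).2 ((h1true z).1 hzf))
        have hy1 : (h x).1 = false := by
          by_contra hb1
          have hall := (C x).1 (by simpa using hb1)
          have := hall y hy
          rw [(hund y).1 hyund] at this
          simp at this
        exact Prod.ext hy1 hy2
    · funext x
      have hpx := hp x
      rcases hhx : h x with ⟨a, b⟩
      rw [hhx] at hpx
      cases a <;> cases b
      · simp [assignOf, (hout x).2 hhx, hhx]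
      · simp [assignOf, (hund x).2 hhx, hhx]
      · exact absurd (hpx rfl) (by simp)
      · simp [assignOf, (hin x).2 hhx, hhx]
  · intro l hl
    obtain ⟨c1, c2, c3⟩ := hl
    have e1 : ∀ y, assignOf l y = (false, false) ↔ l y = .out := by
      intro y; cases hy : l y <;> simp [assignOf, hy]
    have e2 : ∀ y, (assignOf l y).1 = true ↔ l y = .in_ := by
      intro y; cases hy : l y <;> simp [assignOf, hy]
    refine ⟨?_, ?_, ?_⟩
    · intro x; cases hx : l x <;> simp [assignOf, hx]
    · rw [mdelta_iff]
      intro x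
      refine ⟨?_, ?_, ?_, ?_⟩
      · intro hx y hy
        rw [e1]
        exact (c1 x).1 ((e2 x).1 hx) y hy
      · intro hall
        rw [e2]
        exact (c1 x).2 (fun y hy => (e1 y).1 (hall y hy))
      · intro hx
        rcases (c2 x).1 ((e1 x).1 hx) with ⟨y, hy, hyl⟩
        exact ⟨y, hy, (e2 y).2 hyl⟩
      · rintro ⟨y, hy, hyf⟩
        exact (e1 x).2 ((c2 x).2 ⟨y, hy, (e2 y).1 hyf⟩)
    · funext x
      cases hx : l x <;> simp [assignOf, lamOf, hx]
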